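/- Let K be a number field with ring of integers O_K, v a valuation of K of residue characteristic p, and φ ∈ K[x] a post-critically finite polynomial of degree d divisible by p with good reduction at v. Then for any t_0 ∈ O_K and any n ≥ 1, v(disc(φ^∘n(x) − t_0)) ≥ n·d^n·v(p). -/

import Mathlib

open Polynomial

section Helpers

variable {Γ : Type*} [AddCommGroup Γ] [LinearOrder Γ] [IsOrderedAddMonoid Γ]

private lemma coe_nsmul' (m : ℕ) (γ : Γ) :
    (m • (γ : WithTop Γ) : WithTop Γ) = ((m • γ : Γ) : WithTop Γ) := by
  induction m with
  | zero => simp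
  | succ k ih => rw [succ_nsmul, succ_nsmul, ih, WithTop.coe_add]

private lemma nsmul_neg_of_neg' {γ : Γ} (hγ : γ < 0) {m : ℕ} (hm : m ≠ 0) : m • γ < 0 :=
  lt_of_le_of_lt
    ((nsmul_le_nsmul_left_of_nonpos hγ.le (Nat.one_le_iff_ne_zero.2 hm)).trans
      (one_nsmul γ).le) hγ

private lemma nsmul_strict_anti' {γ : Γ} (hγ : γ < 0) {a b : ℕ} (h : a < b) :
    b • γ < a • γ := by
  have hb : b = a + (b - a) := by omega
  rw [hb, add_nsmul]
  have h2 : (b - a) • γ < 0 := nsmul_neg_of_neg' hγ (by omega)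
  calc a • γ + (b - a) • γ < a • γ + 0 := add_lt_add_right h2 _
    _ = a • γ := add_zero _

variable {F : Type*} [Field F] (u : AddValuation F (WithTop Γ))

private lemma val_nat_nonneg (m : ℕ) : (0 : WithTop Γ) ≤ u (m : F) := by
  induction m with
  | zero => simp
  | succ k ih =>
    push_cast
    exact u.map_le_add ih (le_of_eq u.map_one.symm)

private lemma val_int_nonneg (m : ℤ) : (0 : WithTop Γ) ≤ u (m : F) := by
  obtain ⟨k, rfl | rfl⟩ := Int.eq_nat_or_neg m
  · push_cast; exact val_nat_nonneg u k
  · push_cast; rw [u.map_neg]; exact val_nat_nonneg u k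

private lemma val_multiset_prod (m : Multiset F) :
    u m.prod = (m.map (fun x => u x)).sum := by
  induction m using Multiset.induction with
  | empty => simpa using u.map_one
  | cons a s ih => simp [u.map_mul, ih]

private lemma val_finset_prod {ι : Type*} (s : Finset ι) (g : ι → F) :
    u (∏ i ∈ s, g i) = ∑ i ∈ s, u (g i) := by
  classical
  induction s using Finset.cons_induction with
  | empty => simpa using u.map_one
  | cons a s ha ih => rw [Finset.prod_cons, Finset.sum_cons, u.map_mul, ih]

private lemma ms_sum_const_add {α : Type*} (m : Multiset α) (c : WithTop Γ)
    (f : α → WithTop Γ) :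
    (m.map fun a => c + f a).sum = Multiset.card m • c + (m.map f).sum := by
  rw [Multiset.sum_map_add]
  congr 1
  rw [Multiset.map_const', Multiset.sum_replicate]

private lemma ms_sum_swap {α β M : Type*} [AddCommMonoid M] (s : Multiset α)
    (t : Multiset β) (f : α → β → M) :
    (s.map fun a => (t.map (f a)).sum).sum
      = (t.map fun b => (s.map (fun a => f a b)).sum).sum := by
  induction s using Multiset.induction with
  | empty => simp
  | cons a s ih => simp [ih, Multiset.sum_map_add]

private lemma ms_sum_finset_swap {α ι M : Type*} [AddCommMonoid M] (s : Multiset α)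
    (t : Finset ι) (f : ι → α → M) :
    (s.map fun a => ∑ i ∈ t, f i a).sum = ∑ i ∈ t, (s.map (f i)).sum := by
  classical
  induction t using Finset.cons_induction with
  | empty => simp
  | cons i t hi ih =>
    rw [Finset.sum_cons,
      show (Multiset.map (fun a => ∑ j ∈ Finset.cons i t hi, f j a) s)
          = Multiset.map (fun a => f i a + ∑ j ∈ t, f j a) s from
        Multiset.map_congr rfl fun a _ => Finset.sum_cons hi,
      Multiset.sum_map_add, ih]

private lemma val_eval_nonneg {q : F[X]} (hq : ∀ i, 0 ≤ u (q.coeff i)) {x : F}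
    (hx : 0 ≤ u x) : 0 ≤ u (q.eval x) := by
  rw [Polynomial.eval_eq_sum_range]
  refine u.map_le_sum fun i _ => ?_
  rw [u.map_mul, u.map_pow]
  exact add_nonneg (hq i) (nsmul_nonneg hx i)

private lemma val_eval_neg {q : F[X]} (hq : ∀ i, 0 ≤ u (q.coeff i))
    (hlc : u q.leadingCoeff = 0) (hdq : q.natDegree ≠ 0) {x : F} {γ : Γ}
    (hx : u x = (γ : WithTop Γ)) (hγ : γ < 0) :
    u (q.eval x) = ((q.natDegree • γ : Γ) : WithTop Γ) := by
  have hhigh : u (q.coeff q.natDegree * x ^ q.natDegree)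
      = ((q.natDegree • γ : Γ) : WithTop Γ) := by
    rw [u.map_mul, u.map_pow, Polynomial.coeff_natDegree, hlc, zero_add, hx, coe_nsmul']
  have hlow : ∀ i ∈ Finset.range q.natDegree,
      ((((q.natDegree - 1) • γ : Γ)) : WithTop Γ) ≤ u (q.coeff i * x ^ i) := by
    intro i hi
    rw [u.map_mul, u.map_pow, hx, coe_nsmul']
    have h1 : (q.natDegree - 1) • γ ≤ i • γ :=
      nsmul_le_nsmul_left_of_nonpos hγ.le (by have := Finset.mem_range.mp hi; omega)
    exact le_trans (WithTop.coe_le_coe.2 h1) (le_add_of_nonneg_left (hq i))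
  have hstrict : ((q.natDegree • γ : Γ) : WithTop Γ)
      < u (∑ i ∈ Finset.range q.natDegree, q.coeff i * x ^ i) := by
    refine lt_of_lt_of_le ?_ (u.map_le_sum hlow)
    exact WithTop.coe_lt_coe.2 (nsmul_strict_anti' hγ (by omega))
  rw [Polynomial.eval_eq_sum_range, Finset.sum_range_succ,
    u.map_add_eq_of_lt_right (by rw [hhigh]; exact hstrict)]
  exact hhigh

end Helpers

/-- The discriminant of a polynomial `p` over a field `F`, computed in a fixed algebraic
closure `Ω` of `F` via the classical formula
`disc p = (-1)^(d(d-1)/2) · lc(p)^(d-2) · ∏_{p(r)=0} p'(r)`,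
the product being taken over the roots of `p` in `Ω` with multiplicity. -/
noncomputable def polyDisc {F Ω : Type*} [Field F] [Field Ω] [Algebra F Ω]
    [IsAlgClosed Ω] (p : Polynomial F) : Ω :=
  (-1) ^ (p.natDegree * (p.natDegree - 1) / 2)
    * (algebraMap F Ω p.leadingCoeff) ^ ((p.natDegree : ℤ) - 2)
    * ((p.map (algebraMap F Ω)).roots.map
        (fun r => (Polynomial.derivative (p.map (algebraMap F Ω))).eval r)).prod

/-- Let `K` be a number field with ring of integers `O_K`, `v` a
valuation of `K` of residue characteristic `p` (i.e. `p` prime and `v(p) > 0`), and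
`φ ∈ K[x]` a post-critically finite polynomial of degree `d` divisible by `p` with good
reduction at `v`.  Then for any `t₀ ∈ O_K` and any `n ≥ 1`,
`v(disc(φ^∘n(x) − t₀)) ≥ n·d^n·v(p)`; the discriminant is computed in an algebraic
closure of `K` and the inequality holds for any extension `w` of `v` to that closure. -/
theorem stmt_8 {K : Type*} [Field K] [NumberField K]
    {Γ : Type*} [AddCommGroup Γ] [LinearOrder Γ] [IsOrderedAddMonoid Γ]
    (v : AddValuation K (WithTop Γ))
    (w : AddValuation (AlgebraicClosure K) (WithTop Γ))
    (hext : ∀ x : K, w (algebraMap K (AlgebraicClosure K) x) = v x)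
    (p : ℕ) (hp : p.Prime) (hvp : 0 < v (p : K))
    (φ : Polynomial K) (hdeg : 1 ≤ φ.natDegree) (hpd : p ∣ φ.natDegree)
    (hint : ∀ i, 0 ≤ v (φ.coeff i)) (hlead : v φ.leadingCoeff = 0)
    (hpcf : ∀ r : AlgebraicClosure K,
      Polynomial.aeval r (Polynomial.derivative φ) = 0 →
        (Set.range fun n : ℕ =>
          (fun x : AlgebraicClosure K => Polynomial.aeval x φ)^[n] r).Finite)
    (t₀ : K) (ht₀ : IsIntegral ℤ t₀)
    (n : ℕ) (hn : 1 ≤ n) :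
    (n * φ.natDegree ^ n) • v (p : K)
      ≤ w (polyDisc (φ.comp^[n] Polynomial.X - Polynomial.C t₀)) := by
  classical
  unfold polyDisc
  set f : K →+* AlgebraicClosure K := algebraMap K (AlgebraicClosure K) with hf
  set g : K[X] := φ.comp^[n] X - C t₀ with hg
  set G : (AlgebraicClosure K)[X] := g.map f with hG
  have hfinj : Function.Injective f := f.injective
  have hd2 : 2 ≤ φ.natDegree := le_trans hp.two_le (Nat.le_of_dvd (by omega) hpd)
  have hφne : φ ≠ 0 := fun h => by simp [h] at hdeg
  -- w-versions of the hypotheses on φ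
  have hwint : ∀ i, (0 : WithTop Γ) ≤ w ((φ.map f).coeff i) := by
    intro i; rw [Polynomial.coeff_map, hext]; exact hint i
  have hwlead : w ((φ.map f).leadingCoeff) = 0 := by
    rw [Polynomial.leadingCoeff_map f, hext]; exact hlead
  have hwdegφ : (φ.map f).natDegree = φ.natDegree :=
    natDegree_map_eq_of_injective hfinj φ
  set Φ : AlgebraicClosure K → AlgebraicClosure K := fun x => (φ.map f).eval x with hΦ
  -- integrality of Φ
  have hΦint : ∀ x : AlgebraicClosure K, 0 ≤ w x → 0 ≤ w (Φ x) :=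
    fun x hx => val_eval_nonneg w hwint hx
  have hiterint : ∀ (m : ℕ) (x : AlgebraicClosure K), 0 ≤ w x → 0 ≤ w (Φ^[m] x) := by
    intro m
    induction m with
    | zero => intro x hx; simpa using hx
    | succ m ih =>
      intro x hx
      rw [Function.iterate_succ_apply']
      exact hΦint _ (ih x hx)
  -- dominance for Φ
  have hΦdom : ∀ (x : AlgebraicClosure K) (γ : Γ), w x = (γ : WithTop Γ) → γ < 0 →
      w (Φ x) = ((φ.natDegree • γ : Γ) : WithTop Γ) := by
    intro x γ hxγ hγ
    have h := val_eval_neg w hwint hwlead (by omega) hxγ hγ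
    rwa [hwdegφ] at h
  have hΦdomiter : ∀ (x : AlgebraicClosure K) (γ : Γ), w x = (γ : WithTop Γ) → γ < 0 →
      ∀ m : ℕ, w (Φ^[m] x) = (((φ.natDegree ^ m) • γ : Γ) : WithTop Γ) := by
    intro x γ hxγ hγ m
    induction m with
    | zero => simpa using hxγ
    | succ m ih =>
      rw [Function.iterate_succ_apply',
        hΦdom _ _ ih (nsmul_neg_of_neg' hγ (by positivity))]
      congr 1
      rw [pow_succ, mul_nsmul]
  have hcoe0 : ∀ γ : Γ, γ < 0 → ((γ : WithTop Γ) < 0) := fun γ h => by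
    exact_mod_cast h
  have hnegcoe : ∀ x : AlgebraicClosure K, w x < 0 →
      ∃ γ : Γ, w x = (γ : WithTop Γ) ∧ γ < 0 := by
    intro x hx
    cases hc : w x with
    | top => rw [hc] at hx; exact absurd hx (by simp)
    | coe γ =>
      refine ⟨γ, rfl, ?_⟩
      rw [hc] at hx
      exact_mod_cast hx
  -- finite orbit points are integral
  have horb : ∀ c : AlgebraicClosure K,
      (Set.range fun m : ℕ => Φ^[m] c).Finite → 0 ≤ w c := by
    intro c hfin
    by_contra hneg
    push_neg at hneg
    obtain ⟨γ, hγ, hγ0⟩ := hnegcoe c hneg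
    have hinj : Function.Injective fun m : ℕ => Φ^[m] c := by
      intro a b hab
      have heq : (φ.natDegree ^ a) • γ = (φ.natDegree ^ b) • γ := by
        have h1 := hΦdomiter c γ hγ hγ0 a
        have h2 := hΦdomiter c γ hγ hγ0 b
        have h3 : w (Φ^[a] c) = w (Φ^[b] c) := congrArg w hab
        rw [h1, h2] at h3
        exact_mod_cast h3
      rcases lt_trichotomy a b with h | h | h
      · have hlt : φ.natDegree ^ a < φ.natDegree ^ b :=
          Nat.pow_lt_pow_right (by omega) h
        exact absurd heq (ne_of_gt (nsmul_strict_anti' hγ0 hlt))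
      · exact h
      · have hlt : φ.natDegree ^ b < φ.natDegree ^ a :=
          Nat.pow_lt_pow_right (by omega) h
        exact absurd heq.symm (ne_of_gt (nsmul_strict_anti' hγ0 hlt))
    exact (Set.infinite_range_of_injective hinj) hfin
  -- t₀ is integral
  have ht0w : 0 ≤ w (f t₀) := by
    obtain ⟨q, hqmonic, hqeval⟩ := ht₀
    by_contra hneg
    push_neg at hneg
    obtain ⟨γ, hγ, hγ0⟩ := hnegcoe _ hneg
    have hqA : (q.map (algebraMap ℤ (AlgebraicClosure K))).eval (f t₀) = 0 := by
      have h1 : (q.map (algebraMap ℤ (AlgebraicClosure K))).eval (f t₀)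
          = f (Polynomial.aeval t₀ q) := by
        rw [Polynomial.eval_map, Polynomial.aeval_def, Polynomial.hom_eval₂]
        congr 1
      rw [h1, Polynomial.aeval_def, hqeval, map_zero]
    have hcoeff : ∀ i, 0 ≤ w ((q.map (algebraMap ℤ (AlgebraicClosure K))).coeff i) := by
      intro i
      rw [Polynomial.coeff_map]
      exact val_int_nonneg w _
    have hlcq : w (q.map (algebraMap ℤ (AlgebraicClosure K))).leadingCoeff = 0 := by
      rw [(hqmonic.map _).leadingCoeff]
      exact w.map_one
    have hdq : (q.map (algebraMap ℤ (AlgebraicClosure K))).natDegree ≠ 0 := by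
      intro h0
      rw [(hqmonic.map _).natDegree_eq_zero.mp h0] at hqA
      simp at hqA
    have h := val_eval_neg w hcoeff hlcq hdq hγ hγ0
    rw [hqA, AddValuation.map_zero] at h
    exact (WithTop.top_ne_coe) h
  -- facts about the iterates
  have hFdeg : ∀ k : ℕ, (φ.comp^[k] X).natDegree = φ.natDegree ^ k := by
    intro k
    rw [natDegree_iterate_comp, natDegree_X, mul_one]
  have hFlc : ∀ k : ℕ, v (φ.comp^[k] X).leadingCoeff = 0 := by
    intro k
    induction k with
    | zero => simp
    | succ k ih =>
      have hne : (φ.comp^[k] X).natDegree ≠ 0 := by rw [hFdeg]; positivity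
      rw [Function.iterate_succ_apply', leadingCoeff_comp hne, v.map_mul, v.map_pow,
        hlead, ih, smul_zero, add_zero]
  have hFeval : ∀ (k : ℕ) (x : AlgebraicClosure K),
      ((φ.comp^[k] X).map f).eval x = Φ^[k] x := by
    intro k
    induction k with
    | zero => intro x; simp
    | succ k ih =>
      intro x
      rw [Function.iterate_succ_apply' (f := φ.comp), Polynomial.map_comp,
        Polynomial.eval_comp, ih, Function.iterate_succ_apply']
  have hFder : ∀ k : ℕ, derivative (φ.comp^[k] X)
      = ∏ j ∈ Finset.range k, (derivative φ).comp (φ.comp^[j] X) := by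
    intro k
    induction k with
    | zero => simp
    | succ k ih =>
      rw [Function.iterate_succ_apply' (f := φ.comp), Polynomial.derivative_comp, ih,
        Finset.prod_range_succ]
  -- facts about g and G
  have hdn2 : 2 ≤ φ.natDegree ^ n :=
    le_trans hd2 (Nat.le_self_pow (by omega) _)
  have hgdeg : g.natDegree = φ.natDegree ^ n := by
    rw [hg, natDegree_sub_C, hFdeg]
  have hglc : g.leadingCoeff = (φ.comp^[n] X).leadingCoeff := by
    have h1 : (φ.comp^[n] X).natDegree ≠ 0 := by rw [hFdeg]; positivity
    rw [hg, Polynomial.leadingCoeff, natDegree_sub_C, Polynomial.coeff_sub,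
      Polynomial.coeff_C, if_neg h1, sub_zero, Polynomial.coeff_natDegree]
  have hGdeg : G.natDegree = φ.natDegree ^ n := by
    rw [hG, natDegree_map_eq_of_injective hfinj, hgdeg]
  have hGlcw : w G.leadingCoeff = 0 := by
    rw [hG, Polynomial.leadingCoeff_map f, hext, hglc, hFlc]
  have hGne : G ≠ 0 := by
    intro h0
    rw [h0, natDegree_zero] at hGdeg
    omega
  have hGsplits : G.Splits :=
    IsAlgClosed.splits G
  have hGcard : Multiset.card G.roots = φ.natDegree ^ n :=
    (splits_iff_card_roots.mp hGsplits).trans hGdeg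
  have hGeval : ∀ x : AlgebraicClosure K, G.eval x = Φ^[n] x - f t₀ := by
    intro x
    rw [hG, hg, Polynomial.map_sub, Polynomial.map_C, Polynomial.eval_sub,
      Polynomial.eval_C, hFeval n x]
  -- the leading coefficient of φ' has valuation at least v p
  have hderdeg : (derivative φ).natDegree = φ.natDegree - 1 := by
    refine le_antisymm (natDegree_derivative_le φ) (le_natDegree_of_ne_zero ?_)
    rw [Polynomial.coeff_derivative]
    have h1 : φ.natDegree - 1 + 1 = φ.natDegree := by omega
    rw [h1]
    refine mul_ne_zero (leadingCoeff_ne_zero.mpr hφne) ?_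
    have : ((φ.natDegree - 1 : ℕ) : K) + 1 = ((φ.natDegree : ℕ) : K) := by
      exact_mod_cast congrArg (Nat.cast (R := K)) (show φ.natDegree - 1 + 1 = φ.natDegree by omega)
    rw [this]
    exact_mod_cast Nat.cast_ne_zero.mpr (show φ.natDegree ≠ 0 by omega)
  have hφ'lc : v (p : K) ≤ v (derivative φ).leadingCoeff := by
    rw [Polynomial.leadingCoeff, hderdeg, Polynomial.coeff_derivative]
    have h1 : φ.natDegree - 1 + 1 = φ.natDegree := by omega
    rw [h1]
    have hcast : ((φ.natDegree - 1 : ℕ) : K) + 1 = ((φ.natDegree : ℕ) : K) := by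
      exact_mod_cast congrArg (Nat.cast (R := K)) (show φ.natDegree - 1 + 1 = φ.natDegree by omega)
    rw [v.map_mul, hcast]
    obtain ⟨m, hm⟩ := hpd
    have h2 : v (p : K) ≤ v ((φ.natDegree : K)) := by
      rw [hm]
      push_cast
      rw [v.map_mul]
      exact le_add_of_nonneg_right (val_nat_nonneg v m)
    exact le_trans h2 (le_add_of_nonneg_left (hint φ.natDegree))
  -- main bound on the product over the roots
  have hmain : ((n * φ.natDegree ^ n) : ℕ) • v (p : K)
      ≤ w ((G.roots.map fun r => (derivative G).eval r)).prod := by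
    have hderG : derivative G
        = ∏ k ∈ Finset.range n, ((derivative φ).comp (φ.comp^[k] X)).map f := by
      rw [hG, Polynomial.derivative_map, hg, derivative_sub, derivative_C, sub_zero,
        hFder n, ← Polynomial.coe_mapRingHom, map_prod]
    rw [val_multiset_prod w, Multiset.map_map]
    rw [show (G.roots.map ((fun x => w x) ∘ fun r => (derivative G).eval r))
        = G.roots.map (fun r => ∑ k ∈ Finset.range n,
            w (((((derivative φ).comp (φ.comp^[k] X)).map f)).eval r)) from
      Multiset.map_congr rfl fun r _ => by
        rw [Function.comp_apply, hderG, Polynomial.eval_prod, val_finset_prod w]]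
    rw [ms_sum_finset_swap]
    have hbound : ∀ k ∈ Finset.range n, ((φ.natDegree ^ n : ℕ)) • v (p : K)
        ≤ (G.roots.map fun r =>
            w ((((derivative φ).comp (φ.comp^[k] X)).map f).eval r)).sum := by
      intro k hkmem
      have hkn : k < n := Finset.mem_range.mp hkmem
      set ψ : (AlgebraicClosure K)[X] := ((derivative φ).comp (φ.comp^[k] X)).map f with hψ
      have hψsplits : ψ.Splits := IsAlgClosed.splits ψ
      have hψeq := hψsplits.eq_prod_roots
      -- pointwise valuation of ψ.eval r
      have hWr : ∀ r : AlgebraicClosure K,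
          w (ψ.eval r) = w ψ.leadingCoeff + (ψ.roots.map fun s => w (r - s)).sum := by
        intro r
        conv_lhs => rw [hψeq]
        rw [Polynomial.eval_mul, Polynomial.eval_C, w.map_mul,
          Polynomial.eval_multiset_prod, Multiset.map_map, val_multiset_prod w,
          Multiset.map_map]
        congr 2
        exact Multiset.map_congr rfl fun s _ => by simp
      rw [show (G.roots.map fun r => w (ψ.eval r))
          = G.roots.map (fun r => w ψ.leadingCoeff + (ψ.roots.map fun s => w (r - s)).sum)
        from Multiset.map_congr rfl fun r _ => hWr r]
      rw [ms_sum_const_add, hGcard]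
      -- the inner double sum is nonnegative
      have hswap : (G.roots.map fun r => (ψ.roots.map fun s => w (r - s)).sum).sum
          = (ψ.roots.map fun s => (G.roots.map fun r => w (r - s)).sum).sum :=
        ms_sum_swap _ _ _
      have hinner : ∀ s ∈ ψ.roots,
          (G.roots.map fun r => w (r - s)).sum = w (G.eval s) := by
        intro s hs
        have hGeq := hGsplits.eq_prod_roots
        conv_rhs => rw [hGeq]
        rw [Polynomial.eval_mul, Polynomial.eval_C, w.map_mul, hGlcw, zero_add,
          Polynomial.eval_multiset_prod, Multiset.map_map, val_multiset_prod w,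
          Multiset.map_map]
        refine congrArg Multiset.sum (Multiset.map_congr rfl fun r _ => ?_)
        simp only [Function.comp_apply, Polynomial.eval_sub, Polynomial.eval_X,
          Polynomial.eval_C]
        exact w.map_sub_swap r s
      have hGs_nonneg : ∀ s ∈ ψ.roots, 0 ≤ w (G.eval s) := by
        intro s hs
        have hψs : ψ.eval s = 0 := (Polynomial.mem_roots'.mp hs).2
        have hc : ((derivative φ).map f).eval (Φ^[k] s) = 0 := by
          rw [hψ, Polynomial.map_comp, Polynomial.eval_comp, hFeval] at hψs
          exact hψs
        have hc' : Polynomial.aeval (Φ^[k] s) (derivative φ) = 0 := by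
          rw [Polynomial.aeval_def, ← Polynomial.eval_map]
          exact hc
        have hfin := hpcf _ hc'
        have hfun : (fun x : AlgebraicClosure K => Polynomial.aeval x φ) = Φ := by
          funext x
          rw [hΦ, Polynomial.aeval_def, ← Polynomial.eval_map]
        rw [hfun] at hfin
        have hcint : 0 ≤ w (Φ^[k] s) := horb _ hfin
        have hΦnk : Φ^[n - k] (Φ^[k] s) = Φ^[n] s := by
          rw [← Function.iterate_add_apply]
          congr 1
          omega
        rw [hGeval s, ← hΦnk]
        exact w.map_le_sub (hiterint _ _ hcint) ht0w
      have hrest : 0 ≤ (G.roots.map fun r => (ψ.roots.map fun s => w (r - s)).sum).sum := by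
        rw [hswap]
        refine Multiset.sum_nonneg ?_
        intro x hx
        obtain ⟨s, hs, rfl⟩ := Multiset.mem_map.mp hx
        rw [hinner s hs]
        exact hGs_nonneg s hs
      -- valuation of the leading coefficient of ψ
      have hψlc : v (p : K) ≤ w ψ.leadingCoeff := by
        have hne : (φ.comp^[k] X).natDegree ≠ 0 := by rw [hFdeg]; positivity
        rw [hψ, Polynomial.leadingCoeff_map f, hext, leadingCoeff_comp hne, v.map_mul,
          v.map_pow, hFlc, smul_zero, add_zero]
        exact hφ'lc
      calc ((φ.natDegree ^ n : ℕ)) • v (p : K)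
          ≤ ((φ.natDegree ^ n : ℕ)) • w ψ.leadingCoeff := nsmul_le_nsmul_right hψlc _
        _ ≤ ((φ.natDegree ^ n : ℕ)) • w ψ.leadingCoeff
            + (G.roots.map fun r => (ψ.roots.map fun s => w (r - s)).sum).sum :=
          le_add_of_nonneg_right hrest
    calc ((n * φ.natDegree ^ n) : ℕ) • v (p : K)
        = ∑ _k ∈ Finset.range n, ((φ.natDegree ^ n : ℕ)) • v (p : K) := by
          rw [Finset.sum_const, Finset.card_range, ← mul_nsmul, mul_comm]
      _ ≤ _ := Finset.sum_le_sum hbound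
  -- put the three factors together
  have e1 : w ((-1 : AlgebraicClosure K) ^ (g.natDegree * (g.natDegree - 1) / 2)) = 0 := by
    rw [w.map_pow, w.map_neg, w.map_one, smul_zero]
  have e2 : w ((f g.leadingCoeff) ^ ((g.natDegree : ℤ) - 2)) = 0 := by
    have h2 : ((g.natDegree : ℤ) - 2) = ((g.natDegree - 2 : ℕ) : ℤ) := by
      have := hgdeg
      omega
    rw [h2, zpow_natCast, w.map_pow, hext, hglc, hFlc, smul_zero]
  rw [w.map_mul, w.map_mul, e1, e2, zero_add, zero_add]
  exact hmain
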